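/- arXiv:1011.5962 — 2 statements merged into one kernel-verified Lean document; each statement's English description precedes it below -/
import Mathlib

section
/- (Representer theorem) Let H be an RKHS on X with kernel κ, x_1,…,x_N ∈ X, c : ℝ^N → ℝ an arbitrary function, and Ω : [0,∞) → ℝ strictly increasing. Then any minimizer f* over H of the functional f ↦ c(f(x_1),…,f(x_N)) + Ω(‖f‖_H) lies in span{κ(x_1,·),…,κ(x_N,·)}, i.e., f* = ∑_{n=1}^N α_n κ(x_n,·) for some reals α_n. -/
open scoped RealInnerProductSpace

/-- Representer theorem: a minimizer of `f ↦ c(f(x₁),…,f(x_N)) + Ω(‖f‖)` with `Ω`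
strictly increasing on `[0,∞)` lies in the span of the kernel sections at the data
points. -/
theorem representer_theorem
    {X : Type*} {H : Type*} [NormedAddCommGroup H] [InnerProductSpace ℝ H]
    [CompleteSpace H]
    (ev : H → X → ℝ) (k : X → H) (κ : X → X → ℝ)
    (hκ : ∀ x y, κ x y = ev (k x) y)
    (hrepr : ∀ (f : H) (x : X), ev f x = ⟪f, k x⟫)
    (N : ℕ) (x : Fin N → X)
    (c : (Fin N → ℝ) → ℝ)
    (Ω : ℝ → ℝ) (hΩ : StrictMonoOn Ω (Set.Ici 0))
    (fstar : H)
    (hmin : ∀ f : H,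
      c (fun n => ev fstar (x n)) + Ω ‖fstar‖ ≤ c (fun n => ev f (x n)) + Ω ‖f‖) :
    ∃ α : Fin N → ℝ, fstar = ∑ n, α n • k (x n) := by
  set K : Submodule ℝ H := Submodule.span ℝ (Set.range fun n => k (x n)) with hK
  haveI : FiniteDimensional ℝ K :=
    FiniteDimensional.span_of_finite ℝ (Set.finite_range _)
  set v : H := (K.orthogonalProjectionOnto fstar : H) with hv
  have hvK : v ∈ K := (K.orthogonalProjectionOnto fstar).2
  have hw : fstar - v ∈ Kᗮ := Submodule.sub_starProjection_mem_orthogonal (K := K) fstar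
  -- evaluations agree
  have hev : ∀ n, ev v (x n) = ev fstar (x n) := by
    intro n
    have hk : k (x n) ∈ K := Submodule.subset_span ⟨n, rfl⟩
    have h0 : ⟪fstar - v, k (x n)⟫ = 0 := by
      have := hw _ hk; rwa [real_inner_comm] at this
    rw [hrepr, hrepr]
    have := inner_sub_left (𝕜 := ℝ) fstar v (k (x n))
    rw [h0] at this
    linarith
  -- Pythagoras: ‖fstar‖² = ‖v‖² + ‖fstar - v‖²
  have hpyth : ‖fstar‖ ^ 2 = ‖v‖ ^ 2 + ‖fstar - v‖ ^ 2 := by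
    have h0 : ⟪v, fstar - v⟫ = 0 := hw v hvK
    have := norm_add_sq_real v (fstar - v)
    simp only [add_sub_cancel] at this
    rw [this, h0]; ring
  have hnorm_le : ‖v‖ ≤ ‖fstar‖ := by
    have h2 : ‖v‖ ^ 2 ≤ ‖fstar‖ ^ 2 := by nlinarith [sq_nonneg ‖fstar - v‖]
    nlinarith [norm_nonneg v, norm_nonneg fstar]
  -- from minimality, ‖fstar‖ ≤ ‖v‖
  have hmin' := hmin v
  have hceq : (fun n => ev v (x n)) = fun n => ev fstar (x n) := funext hev
  rw [hceq] at hmin'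
  have hΩle : Ω ‖fstar‖ ≤ Ω ‖v‖ := by linarith
  have hfle : ‖fstar‖ ≤ ‖v‖ := by
    by_contra h
    push_neg at h
    exact absurd hΩle (not_le.mpr (hΩ (norm_nonneg v) (norm_nonneg fstar) h))
  have hsq : ‖fstar - v‖ ^ 2 = 0 := by
    rw [le_antisymm hnorm_le hfle] at hpyth; linarith
  have hne : ‖fstar - v‖ = 0 := pow_eq_zero_iff (two_ne_zero) |>.mp hsq
  have hfv : fstar = v := sub_eq_zero.mp (norm_eq_zero.mp hne)
  have hmem : fstar ∈ K := hfv ▸ hvK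
  rw [hK] at hmem
  obtain ⟨α, hα⟩ := (Submodule.mem_span_range_iff_exists_fun ℝ).mp hmem
  exact ⟨α, hα.symm⟩
end

section
/- (Semiparametric representer theorem) Let H be an RKHS on X with kernel κ, ψ_1,…,ψ_M : X → ℝ, x_1,…,x_N ∈ X such that the N×M matrix (ψ_p(x_n)) has rank M, c : ℝ^N → ℝ arbitrary, and Ω_1, Ω_2 : [0,∞) → ℝ strictly increasing. If f̃ = f + h with f ∈ H and h ∈ span{ψ_1,…,ψ_M} minimizes (f,h) ↦ c((f+h)(x_1),…,(f+h)(x_N)) + Ω_1(‖f‖_H) + Ω_2(‖h‖), then f̃ admits a representation f̃(x) = ∑_{n=1}^N α_n κ(x_n, x) + ∑_{k=1}^M β_k ψ_k(x). -/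
open scoped RealInnerProductSpace

/-- Semiparametric representer theorem: if `f̃ = f + h`, with `f ∈ H` and
`h = ∑ γₖ ψₖ` in the span of the functions `ψₖ` (whose evaluation matrix at the data
points has full rank `M`), minimizes
`c((f+h)(x₁),…,(f+h)(x_N)) + Ω₁(‖f‖_H) + Ω₂(‖h‖)` (where `nrm` is the fixed norm on
the span, expressed via coordinates), then `f̃` admits the representation
`f̃(x) = ∑ₙ αₙ κ(xₙ, x) + ∑ₖ βₖ ψₖ(x)`. -/
theorem semiparametric_representer_theorem
    {X : Type*} {H : Type*} [NormedAddCommGroup H] [InnerProductSpace ℝ H]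
    [CompleteSpace H]
    (ev : H → X → ℝ) (k : X → H) (κ : X → X → ℝ)
    (hκ : ∀ x y, κ x y = ev (k x) y)
    (hrepr : ∀ (f : H) (x : X), ev f x = ⟪f, k x⟫)
    (N M : ℕ) (x : Fin N → X) (ψ : Fin M → X → ℝ)
    (hrank : (Matrix.of fun (n : Fin N) (p : Fin M) => ψ p (x n)).rank = M)
    (c : (Fin N → ℝ) → ℝ)
    (Ω₁ Ω₂ : ℝ → ℝ) (hΩ₁ : StrictMonoOn Ω₁ (Set.Ici 0))
    (hΩ₂ : StrictMonoOn Ω₂ (Set.Ici 0))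
    (nrm : (Fin M → ℝ) → ℝ)
    (f : H) (γ : Fin M → ℝ)
    (hmin : ∀ (g : H) (γ' : Fin M → ℝ),
      c (fun n => ev f (x n) + ∑ p, γ p * ψ p (x n)) + Ω₁ ‖f‖ + Ω₂ (nrm γ) ≤
      c (fun n => ev g (x n) + ∑ p, γ' p * ψ p (x n)) + Ω₁ ‖g‖ + Ω₂ (nrm γ')) :
    ∃ (α : Fin N → ℝ) (β : Fin M → ℝ), ∀ y : X,
      ev f y + ∑ p, γ p * ψ p y = ∑ n, α n * κ (x n) y + ∑ p, β p * ψ p y := by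
  classical
  set K : Submodule ℝ H := Submodule.span ℝ (Set.range fun n => k (x n)) with hK
  haveI : FiniteDimensional ℝ K := FiniteDimensional.span_of_finite ℝ (Set.finite_range _)
  haveI : CompleteSpace K := FiniteDimensional.complete ℝ K
  set g : H := (K.orthogonalProjectionOnto f : H) with hg
  have hsub : f - g ∈ Kᗮ := K.sub_starProjection_mem_orthogonal f
  have hev : ∀ n, ev f (x n) = ev g (x n) := by
    intro n
    have hk : k (x n) ∈ K := Submodule.subset_span ⟨n, rfl⟩
    have h0 : ⟪f - g, k (x n)⟫ = 0 := by
      have := hsub _ hk; rwa [real_inner_comm] at this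
    rw [hrepr, hrepr]
    have := inner_sub_left (𝕜 := ℝ) f g (k (x n))
    rw [h0] at this
    linarith
  have hle : ‖g‖ ≤ ‖f‖ := by
    calc ‖g‖ ≤ ‖K.orthogonalProjectionOnto‖ * ‖f‖ :=
          (K.orthogonalProjectionOnto).le_opNorm f
    _ ≤ 1 * ‖f‖ := by
          exact mul_le_mul_of_nonneg_right (Submodule.orthogonalProjectionOnto_norm_le K) (norm_nonneg f)
    _ = ‖f‖ := one_mul _
  have hΩle : Ω₁ ‖f‖ ≤ Ω₁ ‖g‖ := by
    have := hmin g γ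
    simp only [hev] at this ⊢
    linarith
  have hfg : ‖f‖ ≤ ‖g‖ := by
    by_contra hlt
    push_neg at hlt
    exact absurd (hΩ₁ (norm_nonneg g) (norm_nonneg f) hlt) (not_lt.mpr hΩle)
  have hnorm : ‖f‖ = ‖g‖ := le_antisymm hfg hle
  -- Pythagoras : ‖f‖² = ‖g‖² + ‖f - g‖², hence f = g
  have horth : ⟪g, f - g⟫ = 0 := by
    have hg' : g ∈ K := (K.orthogonalProjectionOnto f).2
    exact hsub g hg'
  have hpy : ‖f‖ ^ 2 = ‖g‖ ^ 2 + ‖f - g‖ ^ 2 := by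
    have : f = g + (f - g) := by abel
    calc ‖f‖ ^ 2 = ‖g + (f - g)‖ ^ 2 := by rw [← this]
    _ = ‖g‖ ^ 2 + ‖f - g‖ ^ 2 := by
          have := norm_add_sq_eq_norm_sq_add_norm_sq_real horth
          simpa [pow_two] using this
  have hfgeq : f = g := by
    have h0 : ‖f - g‖ ^ 2 = 0 := by rw [hnorm] at hpy; linarith
    have h1 : f - g = 0 := norm_eq_zero.mp (pow_eq_zero_iff (n := 2) (by norm_num) |>.mp h0)
    exact sub_eq_zero.mp h1
  have hmem : f ∈ K := hfgeq ▸ (K.orthogonalProjectionOnto f).2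
  rw [hK] at hmem
  obtain ⟨α, hα⟩ := (Submodule.mem_span_range_iff_exists_fun ℝ).mp hmem
  refine ⟨α, γ, fun y => ?_⟩
  have : ev f y = ∑ n, α n * κ (x n) y := by
    rw [hrepr, ← hα, sum_inner]
    refine Finset.sum_congr rfl fun n _ => ?_
    rw [real_inner_smul_left, hκ, hrepr]
  rw [this]
end
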